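/- Under the Ewens–Pitman weight system, for every integer 1 ≤ l ≤ m, the conditional expectation of the number of old blocks re-observed with frequency l, given only the number of blocks, satisfies E[R_l | K_n = j] = (1/(C(n,j;σ)·(θ+n)_{m↑}))·binom(m,l)·(−σ·(1−σ)_{(l−1)↑})·Σ_{s=1}^{n−(j−1)} binom(n,s)·(θ + n − s + σ)_{(m−l)↑}·C(s,1;σ−l)·C(n−s, j−1; σ). -/

import Mathlib

open Finset

attribute [local instance] Classical.propDecidable

noncomputable section

/-- Rising factorial `x(x+1)⋯(x+N−1)`. -/
def risingFac (x : ℝ) (N : ℕ) : ℝ := ∏ i ∈ Finset.range N, (x + i)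

/-- Falling factorial `x(x−1)⋯(x−N+1)`. -/
def fallingFac (x : ℝ) (N : ℕ) : ℝ := ∏ i ∈ Finset.range N, (x - i)

/-- Noncentral generalized factorial coefficient `C(N,k;σ,γ)`. -/
def gfc (N k : ℕ) (σ γ : ℝ) : ℝ :=
  (1 / (Nat.factorial k : ℝ)) *
    ∑ i ∈ Finset.range (k + 1),
      (-1 : ℝ) ^ i * (Nat.choose k i : ℝ) * risingFac (-(i : ℝ) * σ - γ) N

/-- Central generalized factorial coefficient `C(N,k;σ)`. -/
def cgfc (N k : ℕ) (σ : ℝ) : ℝ := gfc N k σ 0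

/-- Binomial coefficient over `ℤ`, zero unless `0 ≤ b ≤ a`. -/
def ibinom (a b : ℤ) : ℝ :=
  if 0 ≤ b ∧ b ≤ a then (Nat.choose a.toNat b.toNat : ℝ) else 0

/-- Multinomial coefficient `m!/((l!)^r (m−rl)!)`, zero if `rl > m`. -/
def multinom (m l r : ℕ) : ℝ :=
  if r * l ≤ m then
    (Nat.factorial m : ℝ) / ((Nat.factorial l : ℝ) ^ r * (Nat.factorial (m - r * l) : ℝ))
  else 0

/-- `P` is a set partition of the finset `s`. -/
def IsPartOn {α : Type*} (s : Finset α) (P : Finset (Finset α)) : Prop :=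
  (∀ B ∈ P, B ⊆ s) ∧ ∅ ∉ P ∧ ∀ a ∈ s, ∃! B, B ∈ P ∧ a ∈ B

/-- Restriction of a partition to `s`. -/
def restrictPart {α : Type*} [DecidableEq α] (P : Finset (Finset α)) (s : Finset α) :
    Finset (Finset α) := (P.image fun C => C ∩ s).erase ∅

/-- Gibbs probability of a partition with block sizes `|C|` and `VN k` the Gibbs weight. -/
def gibbsW {α : Type*} (σ : ℝ) (VN : ℕ → ℝ) (P : Finset (Finset α)) : ℝ :=
  VN P.card * ∏ C ∈ P, risingFac (1 - σ) (C.card - 1)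

/-- Ewens–Pitman weight system. -/
def EPV (σ θ : ℝ) : ℕ → ℕ → ℝ :=
  fun N k => (∏ i ∈ Finset.range k, (θ + (i : ℝ) * σ)) / risingFac θ N

/-- The "old" elements `{1,…,n}` inside `{1,…,n+m}`. -/
def oldSet (n m : ℕ) : Finset (Fin (n + m)) :=
  Finset.univ.filter fun x => (x : ℕ) < n

/-- Number of new elements in the block of `ρ` containing the old block `Bi`. -/
def Scount (n m : ℕ) (Bi : Finset (Fin (n + m))) (ρ : Finset (Finset (Fin (n + m)))) : ℕ :=
  ∑ C ∈ ρ.filter (fun C => Bi ⊆ C), (C \ oldSet n m).card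

/-- Partitions of `{1,…,n+m}` extending the partition `πP` of the old elements. -/
def extensions (n m : ℕ) (πP : Finset (Finset (Fin (n + m)))) :
    Finset (Finset (Finset (Fin (n + m)))) :=
  Finset.univ.filter fun ρ => IsPartOn Finset.univ ρ ∧ restrictPart ρ (oldSet n m) = πP

/-- Conditional expectation given complete information (the initial partition `πP`). -/
def condExpPi (σ : ℝ) (V : ℕ → ℕ → ℝ) (n m : ℕ) (πP : Finset (Finset (Fin (n + m))))
    (f : Finset (Finset (Fin (n + m))) → ℝ) : ℝ :=
  (∑ ρ ∈ extensions n m πP, f ρ * gibbsW σ (V (n + m)) ρ) /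
    (∑ ρ ∈ extensions n m πP, gibbsW σ (V (n + m)) ρ)

/-- Partitions of `{1,…,n+m}` whose restriction to the old elements has exactly `j` blocks. -/
def withJ (n m j : ℕ) : Finset (Finset (Finset (Fin (n + m)))) :=
  Finset.univ.filter fun ρ =>
    IsPartOn Finset.univ ρ ∧ (restrictPart ρ (oldSet n m)).card = j

/-- Partitions of `s` with exactly `j` blocks. -/
def partsJOf {α : Type*} [Fintype α] (s : Finset α) (j : ℕ) :
    Finset (Finset (Finset α)) :=
  Finset.univ.filter fun π' => IsPartOn s π' ∧ π'.card = j

/-- Conditional expectation given the incomplete information `K_n = j`. -/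
def condExpK (σ : ℝ) (V : ℕ → ℕ → ℝ) (n m j : ℕ)
    (f : Finset (Finset (Fin (n + m))) → ℝ) : ℝ :=
  (∑ ρ ∈ withJ n m j, f ρ * gibbsW σ (V (n + m)) ρ) /
    (∑ π' ∈ partsJOf (oldSet n m) j, gibbsW σ (V n) π')

/-- Number of old blocks (indexed by `B`) re-observed in the additional sample. -/
def RcntB (n m j : ℕ) (B : Fin j → Finset (Fin (n + m)))
    (ρ : Finset (Finset (Fin (n + m)))) : ℕ :=
  (Finset.univ.filter fun i : Fin j => Scount n m (B i) ρ ≠ 0).card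

/-- Number of old blocks (indexed by `B`) re-observed with frequency `l`. -/
def RlcntB (n m j l : ℕ) (B : Fin j → Finset (Fin (n + m)))
    (ρ : Finset (Finset (Fin (n + m)))) : ℕ :=
  (Finset.univ.filter fun i : Fin j => Scount n m (B i) ρ = l).card

/-- Number of blocks of the restriction whose containing block has a new element. -/
def Rcnt (n m : ℕ) (ρ : Finset (Finset (Fin (n + m)))) : ℕ :=
  ((restrictPart ρ (oldSet n m)).filter fun Bi =>
    ∃ C ∈ ρ, Bi ⊆ C ∧ (C \ oldSet n m) ≠ ∅).card

/-- Number of blocks of the restriction whose containing block has exactly `l` new elements. -/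
def Rlcnt (n m l : ℕ) (ρ : Finset (Finset (Fin (n + m)))) : ℕ :=
  ((restrictPart ρ (oldSet n m)).filter fun Bi =>
    ∃ C ∈ ρ, Bi ⊆ C ∧ (C \ oldSet n m).card = l).card

/-- Number of bijections from `Fin j` onto the blocks of `π'` satisfying `Q`. -/
def bijCount {α : Type*} [Fintype α] (j : ℕ) (π' : Finset (Finset α))
    (Q : (Fin j → Finset α) → Prop) : ℕ :=
  ((Finset.univ : Finset (Fin j → Finset α)).filter fun β =>
    Function.Injective β ∧ Finset.image β Finset.univ = π' ∧ Q β).card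

/-- Conditional expectation given almost-complete information. -/
def condExpTau (σ : ℝ) (V : ℕ → ℕ → ℝ) (n m j p : ℕ) (τ : Fin p → Fin j) (nτ : Fin p → ℕ)
    (f : Finset (Finset (Fin (n + m))) → ℝ) : ℝ :=
  (∑ ρ ∈ withJ n m j,
      (bijCount j (restrictPart ρ (oldSet n m)) (fun β => ∀ i, (β (τ i)).card = nτ i) : ℝ) *
        f ρ * gibbsW σ (V (n + m)) ρ) /
    (∑ π' ∈ partsJOf (oldSet n m) j,
      (bijCount j π' (fun β => ∀ i, (β (τ i)).card = nτ i) : ℝ) * gibbsW σ (V n) π')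

section Aux
set_option linter.unusedSectionVars false

variable {α : Type*} [Fintype α] [DecidableEq α]

lemma blk_ne {s : Finset α} {P : Finset (Finset α)} (h : IsPartOn s P) {B : Finset α}
    (hB : B ∈ P) : B ≠ ∅ := fun e => h.2.1 (e ▸ hB)

lemma blk_eq {s : Finset α} {P : Finset (Finset α)} (h : IsPartOn s P) {B B' : Finset α}
    (hB : B ∈ P) (hB' : B' ∈ P) {a : α} (haB : a ∈ B) (haB' : a ∈ B') : B = B' := by
  have has : a ∈ s := h.1 B hB haB
  obtain ⟨C, _, hu⟩ := h.2.2 a has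
  rw [hu B ⟨hB, haB⟩, hu B' ⟨hB', haB'⟩]

lemma blk_sub_eq {s : Finset α} {P : Finset (Finset α)} (h : IsPartOn s P) {B B' B₀ : Finset α}
    (hB : B ∈ P) (hB' : B' ∈ P) (h0 : B₀.Nonempty) (hs : B₀ ⊆ B) (hs' : B₀ ⊆ B') : B = B' := by
  obtain ⟨a, ha⟩ := h0
  exact blk_eq h hB hB' (hs ha) (hs' ha)

lemma biUnion_blocks {s : Finset α} {P : Finset (Finset α)} (h : IsPartOn s P) :
    P.biUnion (fun x => x) = s := by
  ext a
  simp only [mem_biUnion]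
  constructor
  · rintro ⟨B, hB, haB⟩; exact h.1 B hB haB
  · intro has; obtain ⟨B, hB, -⟩ := h.2.2 a has; exact ⟨B, hB.1, hB.2⟩

lemma blocks_disjoint {s : Finset α} {P : Finset (Finset α)} (h : IsPartOn s P) {B B' : Finset α}
    (hB : B ∈ P) (hB' : B' ∈ P) (hne : B ≠ B') : Disjoint B B' := by
  rw [Finset.disjoint_left]
  intro a haB haB'
  exact hne (blk_eq h hB hB' haB haB')

lemma sum_card_blocks {s : Finset α} {P : Finset (Finset α)} (h : IsPartOn s P) :
    ∑ B ∈ P, B.card = s.card := by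
  rw [← biUnion_blocks h,
    Finset.card_biUnion (fun x hx y hy hxy => blocks_disjoint h hx hy hxy)]

lemma card_blocks_le {s : Finset α} {P : Finset (Finset α)} (h : IsPartOn s P) :
    P.card ≤ s.card := by
  calc P.card = ∑ _B ∈ P, 1 := by simp
  _ ≤ ∑ B ∈ P, B.card := Finset.sum_le_sum fun B hB =>
      Nat.one_le_iff_ne_zero.2 (by simpa [Finset.card_eq_zero] using blk_ne h hB)
  _ = s.card := sum_card_blocks h

lemma mem_restrictPart {ρ : Finset (Finset α)} {s B : Finset α} :
    B ∈ restrictPart ρ s ↔ B ≠ ∅ ∧ ∃ C ∈ ρ, C ∩ s = B := by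
  simp [restrictPart, mem_erase, mem_image, eq_comm]

lemma restrictPart_isPartOn {u s : Finset α} {ρ : Finset (Finset α)} (h : IsPartOn u ρ)
    (hsu : s ⊆ u) : IsPartOn s (restrictPart ρ s) := by
  refine ⟨?_, ?_, ?_⟩
  · intro B hB
    obtain ⟨-, C, -, hC⟩ := mem_restrictPart.1 hB
    rw [← hC]; exact inter_subset_right
  · intro hB; exact (mem_restrictPart.1 hB).1 rfl
  · intro a has
    obtain ⟨C, ⟨hC, haC⟩, hu⟩ := h.2.2 a (hsu has)
    have hmem : a ∈ C ∩ s := mem_inter.2 ⟨haC, has⟩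
    refine ⟨C ∩ s, ⟨mem_restrictPart.2 ⟨?_, C, hC, rfl⟩, hmem⟩, ?_⟩
    · intro e; rw [e] at hmem; exact notMem_empty a hmem
    · rintro B ⟨hB, haB⟩
      obtain ⟨-, D, hD, hDB⟩ := mem_restrictPart.1 hB
      rw [← hDB] at haB ⊢
      rw [hu D ⟨hD, (mem_inter.1 haB).1⟩]

lemma restrictPart_self {s : Finset α} {ρ : Finset (Finset α)} (h : IsPartOn s ρ) :
    restrictPart ρ s = ρ := by
  unfold restrictPart
  rw [show ρ.image (fun C => C ∩ s) = ρ.image id by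
      exact image_congr fun C hC => inter_eq_left.2 (h.1 C hC), image_id]
  exact erase_eq_of_notMem h.2.1


lemma isPartOn_insert_singleton {X : Finset α} {ρ₀ : Finset (Finset α)} {a : α}
    (h : IsPartOn X ρ₀) (ha : a ∉ X) : IsPartOn (insert a X) (insert {a} ρ₀) := by
  refine ⟨?_, ?_, ?_⟩
  · intro B hB
    rcases mem_insert.1 hB with rfl | hB
    · simp
    · exact (h.1 B hB).trans (subset_insert a X)
  · intro hc
    rcases mem_insert.1 hc with e | hc
    · exact absurd e.symm (singleton_ne_empty a)
    · exact h.2.1 hc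
  · intro b hb
    rcases mem_insert.1 hb with hba | hb
    · refine ⟨{a}, ⟨mem_insert_self _ _, by simp [hba]⟩, ?_⟩
      rintro B ⟨hB, hbB⟩
      rcases mem_insert.1 hB with e | hB
      · exact e
      · exact absurd (h.1 B hB hbB) (by rwa [hba])
    · obtain ⟨B, ⟨hB, hbB⟩, hu⟩ := h.2.2 b hb
      refine ⟨B, ⟨mem_insert_of_mem hB, hbB⟩, ?_⟩
      rintro B' ⟨hB', hbB'⟩
      rcases mem_insert.1 hB' with e | hB'
      · rw [e, mem_singleton] at hbB'; exact absurd (hbB' ▸ hb) ha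
      · exact hu B' ⟨hB', hbB'⟩

lemma insert_block_not_mem {X : Finset α} {ρ₀ : Finset (Finset α)} {a : α} {C : Finset α}
    (h : IsPartOn X ρ₀) (ha : a ∉ X) {D : Finset α} (hD : D ∈ ρ₀) : insert a C ≠ D := by
  intro e
  exact ha (h.1 D hD (e ▸ mem_insert_self a C))

lemma isPartOn_insert_block {X : Finset α} {ρ₀ : Finset (Finset α)} {a : α} {C : Finset α}
    (h : IsPartOn X ρ₀) (ha : a ∉ X) (hC : C ∈ ρ₀) :
    IsPartOn (insert a X) (insert (insert a C) (ρ₀.erase C)) := by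
  refine ⟨?_, ?_, ?_⟩
  · intro B hB
    rcases mem_insert.1 hB with rfl | hB
    · exact insert_subset_insert a (h.1 C hC)
    · exact (h.1 B (mem_of_mem_erase hB)).trans (subset_insert a X)
  · intro hc
    rcases mem_insert.1 hc with e | hc
    · exact absurd e.symm (insert_ne_empty a C)
    · exact h.2.1 (mem_of_mem_erase hc)
  · intro b hb
    rcases mem_insert.1 hb with hba | hb
    · refine ⟨insert a C, ⟨mem_insert_self _ _, by simp [hba]⟩, ?_⟩
      rintro B ⟨hB, hbB⟩
      rcases mem_insert.1 hB with e | hB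
      · exact e
      · exact absurd (h.1 B (mem_of_mem_erase hB) hbB) (by rwa [hba])
    · obtain ⟨B, ⟨hB, hbB⟩, hu⟩ := h.2.2 b hb
      by_cases hBC : B = C
      · subst hBC
        refine ⟨insert a B, ⟨mem_insert_self _ _, mem_insert_of_mem hbB⟩, ?_⟩
        rintro B' ⟨hB', hbB'⟩
        rcases mem_insert.1 hB' with e | hB'
        · exact e
        · exact absurd (hu B' ⟨mem_of_mem_erase hB', hbB'⟩) (ne_of_mem_erase hB')
      · refine ⟨B, ⟨mem_insert_of_mem (mem_erase.2 ⟨hBC, hB⟩), hbB⟩, ?_⟩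
        rintro B' ⟨hB', hbB'⟩
        rcases mem_insert.1 hB' with e | hB'
        · subst e
          rcases mem_insert.1 hbB' with hba | hbC
          · exact absurd (hba ▸ hb) ha
          · exact absurd (hu C ⟨hC, hbC⟩).symm hBC
        · exact hu B' ⟨mem_of_mem_erase hB', hbB'⟩

lemma restrictPart_insert_singleton {ρ₀ : Finset (Finset α)} {a : α} {s : Finset α}
    (has : a ∉ s) : restrictPart (insert {a} ρ₀) s = restrictPart ρ₀ s := by
  unfold restrictPart
  rw [image_insert]
  have : ({a} : Finset α) ∩ s = ∅ := by
    rw [singleton_inter_of_notMem has]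
  rw [this]
  ext B
  simp [mem_erase, mem_insert]

lemma restrictPart_insert_block {ρ₀ : Finset (Finset α)} {a : α} {s C : Finset α}
    (has : a ∉ s) (hC : C ∈ ρ₀) :
    restrictPart (insert (insert a C) (ρ₀.erase C)) s = restrictPart ρ₀ s := by
  unfold restrictPart
  rw [image_insert]
  have h1 : insert a C ∩ s = C ∩ s := by
    ext x
    simp only [mem_inter, mem_insert]
    constructor
    · rintro ⟨rfl | hxC, hxs⟩
      · exact absurd hxs has
      · exact ⟨hxC, hxs⟩
    · rintro ⟨hxC, hxs⟩; exact ⟨Or.inr hxC, hxs⟩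
  rw [h1]
  conv_rhs => rw [← insert_erase hC, image_insert]


lemma block_inter_eq {X : Finset α} {ρ : Finset (Finset α)} {a : α} {Ca : Finset α}
    (h : IsPartOn (insert a X) ρ) (ha : a ∉ X) (hCa : Ca ∈ ρ) (haCa : a ∈ Ca) :
    (∀ C ∈ ρ, C ≠ Ca → C ∩ X = C) ∧ Ca ∩ X = Ca.erase a := by
  constructor
  · intro C hC hne
    refine inter_eq_left.2 fun x hx => ?_
    rcases mem_insert.1 (h.1 C hC hx) with rfl | hxX
    · exact absurd (blk_eq h hC hCa hx haCa) hne
    · exact hxX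
  · ext x
    simp only [mem_inter, mem_erase]
    constructor
    · rintro ⟨hxCa, hxX⟩
      exact ⟨fun e => ha (e ▸ hxX), hxCa⟩
    · rintro ⟨hxa, hxCa⟩
      rcases mem_insert.1 (h.1 Ca hCa hxCa) with e | hxX
      · exact absurd e hxa
      · exact ⟨hxCa, hxX⟩

lemma restrictPart_of_insert {X : Finset α} {ρ : Finset (Finset α)} {a : α} {Ca : Finset α}
    (h : IsPartOn (insert a X) ρ) (ha : a ∉ X) (hCa : Ca ∈ ρ) (haCa : a ∈ Ca) :
    restrictPart ρ X =
      if Ca.erase a = ∅ then ρ.erase Ca else insert (Ca.erase a) (ρ.erase Ca) := by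
  obtain ⟨f2, f3⟩ := block_inter_eq h ha hCa haCa
  have f5 : (∅ : Finset α) ∉ ρ.erase Ca := fun hc => h.2.1 (mem_of_mem_erase hc)
  have f4 : ρ.image (fun C => C ∩ X) = insert (Ca.erase a) (ρ.erase Ca) := by
    conv_lhs => rw [← insert_erase hCa]
    rw [image_insert, f3]
    congr 1
    rw [show (ρ.erase Ca).image (fun C => C ∩ X) = (ρ.erase Ca).image id from
      image_congr fun C hC => f2 C (mem_of_mem_erase hC) (ne_of_mem_erase hC), image_id]
  unfold restrictPart
  rw [f4]
  by_cases hM : Ca.erase a = ∅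
  · rw [if_pos hM, hM, erase_insert f5]
  · rw [if_neg hM, erase_eq_of_notMem]
    intro hc
    rcases mem_insert.1 hc with e | hc
    · exact hM e.symm
    · exact f5 hc

lemma erase_block_not_mem {X : Finset α} {ρ : Finset (Finset α)} {a : α} {Ca : Finset α}
    (h : IsPartOn (insert a X) ρ) (hCa : Ca ∈ ρ) (haCa : a ∈ Ca) :
    Ca.erase a ∉ ρ.erase Ca := by
  intro hc
  rcases eq_empty_or_nonempty (Ca.erase a) with e | ⟨x, hx⟩
  · exact h.2.1 (mem_of_mem_erase (e ▸ hc))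
  · exact ne_of_mem_erase hc
      (blk_eq h (mem_of_mem_erase hc) hCa hx (mem_of_mem_erase hx))

lemma glue_eq {X : Finset α} {ρ : Finset (Finset α)} {a : α} {Ca : Finset α}
    (h : IsPartOn (insert a X) ρ) (ha : a ∉ X) (hCa : Ca ∈ ρ) (haCa : a ∈ Ca) :
    (if Ca.erase a = ∅ then insert {a} (restrictPart ρ X)
      else insert (insert a (Ca.erase a)) ((restrictPart ρ X).erase (Ca.erase a))) = ρ := by
  rw [restrictPart_of_insert h ha hCa haCa]
  by_cases hM : Ca.erase a = ∅
  · rw [if_pos hM, if_pos hM]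
    have : Ca = {a} := by
      ext x
      rw [mem_singleton]
      constructor
      · intro hx
        by_contra hxa
        exact notMem_empty x (hM ▸ mem_erase.2 ⟨hxa, hx⟩)
      · rintro rfl; exact haCa
    rw [← this, insert_erase hCa]
  · rw [if_neg hM, if_neg hM, erase_insert (erase_block_not_mem h hCa haCa),
      insert_erase haCa, insert_erase hCa]

lemma sum_partition_insert (X : Finset α) (a : α) (ha : a ∉ X) (F : Finset (Finset α) → ℝ) :
    (∑ ρ ∈ univ.filter fun ρ => IsPartOn (insert a X) ρ, F ρ)
    = ∑ ρ₀ ∈ univ.filter fun ρ₀ => IsPartOn X ρ₀,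
        (F (insert {a} ρ₀) + ∑ C ∈ ρ₀, F (insert (insert a C) (ρ₀.erase C))) := by
  classical
  have hRHS :
      (∑ ρ₀ ∈ univ.filter fun ρ₀ => IsPartOn X ρ₀,
        (F (insert {a} ρ₀) + ∑ C ∈ ρ₀, F (insert (insert a C) (ρ₀.erase C))))
      = ∑ p ∈ (univ.filter fun ρ₀ => IsPartOn X ρ₀).sigma
            (fun ρ₀ => insert (∅ : Finset α) ρ₀),
          F (if p.2 = ∅ then insert {a} p.1
             else insert (insert a p.2) (p.1.erase p.2)) := by
    rw [Finset.sum_sigma]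
    refine sum_congr rfl fun ρ₀ hρ₀ => ?_
    have hρ₀' : IsPartOn X ρ₀ := (mem_filter.1 hρ₀).2
    rw [Finset.sum_insert hρ₀'.2.1, if_pos rfl]
    congr 1
    exact sum_congr rfl fun C hC => by rw [if_neg (blk_ne hρ₀' hC)]
  rw [hRHS]
  have hblk : ∀ ρ ∈ univ.filter fun ρ => IsPartOn (insert a X) ρ,
      ∃! C, C ∈ ρ ∧ a ∈ C := by
    intro ρ hρ
    exact (mem_filter.1 hρ).2.2.2 a (mem_insert_self a X)
  set blk : Finset (Finset α) → Finset α := fun ρ =>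
    if h : ∃! C, C ∈ ρ ∧ a ∈ C then Finset.choose (fun C => a ∈ C) ρ h else ∅ with hblkdef
  have hblk_mem : ∀ {ρ}, (h : ∃! C, C ∈ ρ ∧ a ∈ C) → blk ρ ∈ ρ ∧ a ∈ blk ρ := by
    intro ρ h
    rw [hblkdef]
    simp only [dif_pos h]
    exact ⟨Finset.choose_mem _ _ _, Finset.choose_property (fun C => a ∈ C) ρ h⟩
  have hblk_uniq : ∀ {ρ D}, (h : ∃! C, C ∈ ρ ∧ a ∈ C) → D ∈ ρ → a ∈ D → blk ρ = D := by
    intro ρ D h hD haD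
    exact h.unique ⟨(hblk_mem h).1, (hblk_mem h).2⟩ ⟨hD, haD⟩
  refine Finset.sum_nbij' (i := fun ρ => (⟨restrictPart ρ X, (blk ρ).erase a⟩ :
      Σ _ : Finset (Finset α), Finset α))
    (j := fun p => if p.2 = ∅ then insert {a} p.1
             else insert (insert a p.2) (p.1.erase p.2)) ?_ ?_ ?_ ?_ ?_
  · -- i maps to sigma set
    intro ρ hρ
    have hP : IsPartOn (insert a X) ρ := (mem_filter.1 hρ).2
    obtain ⟨hmem, hamem⟩ := hblk_mem (hblk ρ hρ)
    rw [Finset.mem_sigma]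
    constructor
    · exact mem_filter.2 ⟨mem_univ _, restrictPart_isPartOn hP (subset_insert a X)⟩
    · rw [restrictPart_of_insert hP ha hmem hamem]
      by_cases hM : (blk ρ).erase a = ∅
      · rw [hM]; exact mem_insert_self _ _
      · rw [if_neg hM]; exact mem_insert_of_mem (mem_insert_self _ _)
  · -- j maps to partition set
    rintro ⟨ρ₀, C⟩ hp
    dsimp only
    rw [Finset.mem_sigma] at hp
    have hρ₀ : IsPartOn X ρ₀ := (mem_filter.1 hp.1).2
    rcases mem_insert.1 hp.2 with rfl | hC
    · simp only [if_pos rfl]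
      exact mem_filter.2 ⟨mem_univ _, isPartOn_insert_singleton hρ₀ ha⟩
    · rw [if_neg (blk_ne hρ₀ hC)]
      exact mem_filter.2 ⟨mem_univ _, isPartOn_insert_block hρ₀ ha hC⟩
  · -- left inverse : j (i ρ) = ρ
    intro ρ hρ
    dsimp only
    have hP : IsPartOn (insert a X) ρ := (mem_filter.1 hρ).2
    obtain ⟨hmem, hamem⟩ := hblk_mem (hblk ρ hρ)
    exact glue_eq hP ha hmem hamem
  · -- right inverse : i (j p) = p
    rintro ⟨ρ₀, C⟩ hp
    dsimp only
    rw [Finset.mem_sigma] at hp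
    have hρ₀ : IsPartOn X ρ₀ := (mem_filter.1 hp.1).2
    rcases mem_insert.1 hp.2 with rfl | hC
    · have h1 : restrictPart (insert {a} ρ₀) X = ρ₀ := by
        rw [restrictPart_insert_singleton ha, restrictPart_self hρ₀]
      have h2 : blk (insert {a} ρ₀) = {a} := by
        have hP : IsPartOn (insert a X) (insert {a} ρ₀) :=
          isPartOn_insert_singleton hρ₀ ha
        exact hblk_uniq (hP.2.2 a (mem_insert_self a X)) (mem_insert_self _ _)
          (mem_singleton_self a)
      simp [h1, h2]
    · have hCne : C ≠ ∅ := blk_ne hρ₀ hC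
      have h1 : restrictPart (insert (insert a C) (ρ₀.erase C)) X = ρ₀ := by
        rw [restrictPart_insert_block ha hC, restrictPart_self hρ₀]
      have h2 : blk (insert (insert a C) (ρ₀.erase C)) = insert a C := by
        have hP : IsPartOn (insert a X) (insert (insert a C) (ρ₀.erase C)) :=
          isPartOn_insert_block hρ₀ ha hC
        exact hblk_uniq (hP.2.2 a (mem_insert_self a X)) (mem_insert_self _ _)
          (mem_insert_self a C)
      have haC : a ∉ C := fun hc => ha (hρ₀.1 C hC hc)
      simp [if_neg hCne, h1, h2, erase_insert haC]
  · -- function equality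
    intro ρ hρ
    dsimp only
    have hP : IsPartOn (insert a X) ρ := (mem_filter.1 hρ).2
    obtain ⟨hmem, hamem⟩ := hblk_mem (hblk ρ hρ)
    exact (congrArg F (glue_eq hP ha hmem hamem)).symm


lemma risingFac_zero (x : ℝ) : risingFac x 0 = 1 := by simp [risingFac]

lemma risingFac_succ (x : ℝ) (n : ℕ) : risingFac x (n + 1) = risingFac x n * (x + n) :=
  Finset.prod_range_succ _ _

lemma risingFac_add (x : ℝ) (a b : ℕ) :
    risingFac x (a + b) = risingFac x a * risingFac (x + a) b := by
  unfold risingFac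
  rw [Finset.prod_range_add]
  congr 1
  exact prod_congr rfl fun i _ => by push_cast; ring

lemma risingFac_zero_arg {n : ℕ} (hn : 1 ≤ n) : risingFac 0 n = 0 :=
  Finset.prod_eq_zero (mem_range.2 hn) (by simp)

lemma risingFac_pos {x : ℝ} (hx : 0 < x) (n : ℕ) : 0 < risingFac x n :=
  Finset.prod_pos fun i _ => by positivity

lemma risingFac_ne_zero {x : ℝ} (hx : 0 < x) (n : ℕ) : risingFac x n ≠ 0 :=
  ne_of_gt (risingFac_pos hx n)

lemma cgfc_zero_right (N : ℕ) (σ : ℝ) : cgfc N 0 σ = if N = 0 then 1 else 0 := by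
  unfold cgfc gfc
  rcases Nat.eq_zero_or_pos N with rfl | hN
  · simp [risingFac_zero]
  · rw [if_neg (Nat.pos_iff_ne_zero.1 hN)]
    have : -(0:ℝ) * σ - 0 = 0 := by ring
    simp [this, risingFac_zero_arg hN]

lemma cgfc_zero_left (j : ℕ) (σ : ℝ) : cgfc 0 j σ = if j = 0 then 1 else 0 := by
  unfold cgfc gfc
  have h : ∀ i ∈ Finset.range (j+1),
      (-1 : ℝ) ^ i * (Nat.choose j i : ℝ) * risingFac (-(i : ℝ) * σ - 0) 0
      = (-1 : ℝ) ^ i * 1 ^ (j - i) * (Nat.choose j i : ℝ) := by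
    intro i _
    rw [risingFac_zero]
    ring
  rw [Finset.sum_congr rfl h, ← add_pow (-1 : ℝ) 1 j]
  rcases Nat.eq_zero_or_pos j with rfl | hj
  · norm_num
  · rw [if_neg (Nat.pos_iff_ne_zero.1 hj)]
    rw [show (-1 : ℝ) + 1 = 0 by ring, zero_pow (Nat.pos_iff_ne_zero.1 hj)]
    ring

lemma cgfc_succ (N k : ℕ) (σ : ℝ) :
    cgfc (N + 1) (k + 1) σ = σ * cgfc N k σ + ((N : ℝ) - (k + 1) * σ) * cgfc N (k + 1) σ := by
  unfold cgfc gfc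
  have key : ∑ i ∈ Finset.range (k + 2),
      (-1 : ℝ) ^ i * ((k+1).choose i : ℝ) * risingFac (-(i : ℝ) * σ - 0) (N + 1)
      = ((N : ℝ) - (k + 1) * σ) *
          (∑ i ∈ Finset.range (k + 2),
            (-1 : ℝ) ^ i * ((k+1).choose i : ℝ) * risingFac (-(i : ℝ) * σ - 0) N)
        + σ * (k + 1) *
          (∑ i ∈ Finset.range (k + 1),
            (-1 : ℝ) ^ i * (k.choose i : ℝ) * risingFac (-(i : ℝ) * σ - 0) N) := by
    have expand : ∀ i ∈ Finset.range (k + 2),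
        (-1 : ℝ) ^ i * ((k+1).choose i : ℝ) * risingFac (-(i : ℝ) * σ - 0) (N + 1)
        = ((N : ℝ) - (k + 1) * σ) *
            ((-1 : ℝ) ^ i * ((k+1).choose i : ℝ) * risingFac (-(i : ℝ) * σ - 0) N)
          + σ * (k + 1) *
            ((-1 : ℝ) ^ i * (k.choose i : ℝ) * risingFac (-(i : ℝ) * σ - 0) N) := by
      intro i hi
      have hi' : i ≤ k + 1 := Nat.lt_succ_iff.1 (mem_range.1 hi)
      have hcast : ((k+1).choose i : ℝ) * ((k + 1 : ℝ) - i) = (k + 1) * (k.choose i : ℝ) := by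
        have hnat : k.choose i * (k + 1) = (k+1).choose i * (k + 1 - i) :=
          Nat.choose_mul_succ_eq k i
        have : ((k.choose i * (k + 1) : ℕ) : ℝ) = (((k+1).choose i * (k + 1 - i) : ℕ) : ℝ) := by
          rw [hnat]
        push_cast [Nat.cast_sub hi'] at this
        linarith [this]
      rw [risingFac_succ]
      have : (-(i : ℝ) * σ - 0) + N
          = ((N : ℝ) - (k + 1) * σ) + ((k + 1 : ℝ) - i) * σ := by ring
      rw [this]
      linear_combination ((-1 : ℝ) ^ i * risingFac (-(i : ℝ) * σ - 0) N * σ) * hcast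
    rw [Finset.sum_congr rfl expand, Finset.sum_add_distrib, ← Finset.mul_sum, ← Finset.mul_sum]
    congr 1
    rw [Finset.sum_range_succ]
    simp [Nat.choose_succ_self]
  have hfac : ((k+1).factorial : ℝ) = (k + 1) * (k.factorial : ℝ) := by
    rw [Nat.factorial_succ]; push_cast; ring
  rw [key, hfac]
  have hk1 : (k : ℝ) + 1 ≠ 0 := by positivity
  have hkf : (k.factorial : ℝ) ≠ 0 := Nat.cast_ne_zero.2 (Nat.factorial_ne_zero _)
  field_simp
  ring


def Ssum (σ : ℝ) (s : Finset α) (j : ℕ) : ℝ :=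
  ∑ π' ∈ univ.filter fun π' => IsPartOn s π' ∧ π'.card = j,
    ∏ B ∈ π', risingFac (1 - σ) (B.card - 1)

lemma Ssum_eq_if (σ : ℝ) (X : Finset α) (k : ℕ) :
    Ssum σ X k = ∑ π ∈ univ.filter fun π => IsPartOn X π,
      (if π.card = k then ∏ B ∈ π, risingFac (1 - σ) (B.card - 1) else 0) := by
  unfold Ssum
  rw [← Finset.filter_filter, Finset.sum_filter]

lemma isPartOn_empty_iff {π' : Finset (Finset α)} : IsPartOn (∅ : Finset α) π' ↔ π' = ∅ := by
  constructor
  · intro h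
    rw [eq_empty_iff_forall_notMem]
    intro B hB
    have h1 := h.1 B hB
    rw [subset_empty] at h1
    exact blk_ne h hB h1
  · rintro rfl
    exact ⟨by simp, by simp, by simp⟩

lemma Ssum_empty (σ : ℝ) (j : ℕ) : Ssum σ (∅ : Finset α) j = if j = 0 then 1 else 0 := by
  unfold Ssum
  have : (univ.filter fun π' : Finset (Finset α) => IsPartOn ∅ π' ∧ π'.card = j)
      = if j = 0 then {∅} else ∅ := by
    ext π'
    simp only [mem_filter, mem_univ, true_and, isPartOn_empty_iff]
    by_cases hj : j = 0
    · subst hj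
      rw [if_pos rfl]
      simp only [mem_singleton]
      constructor
      · rintro ⟨rfl, -⟩; rfl
      · rintro rfl; exact ⟨rfl, rfl⟩
    · rw [if_neg hj]
      simp only [notMem_empty, iff_false, not_and]
      rintro rfl h0
      exact hj (by simpa using h0.symm)
  rw [this]
  split <;> simp

lemma Ssum_zero_blocks (σ : ℝ) {s : Finset α} (hs : s.Nonempty) : Ssum σ s 0 = 0 := by
  unfold Ssum
  rw [Finset.filter_false_of_mem, Finset.sum_empty]
  rintro π' -
  rintro ⟨hP, hc⟩
  rw [Finset.card_eq_zero] at hc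
  subst hc
  obtain ⟨a, ha⟩ := hs
  obtain ⟨B, hB, -⟩ := hP.2.2 a ha
  exact notMem_empty B hB.1

lemma Ssum_card_lt (σ : ℝ) {s : Finset α} {j : ℕ} (h : s.card < j) : Ssum σ s j = 0 := by
  unfold Ssum
  rw [Finset.filter_false_of_mem, Finset.sum_empty]
  rintro π' - ⟨hP, hc⟩
  exact absurd (hc ▸ card_blocks_le hP) (not_le.2 h)

lemma singleton_not_mem_part {s : Finset α} {ρ₀ : Finset (Finset α)} {a : α}
    (h : IsPartOn s ρ₀) (ha : a ∉ s) : {a} ∉ ρ₀ :=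
  fun hc => ha (h.1 _ hc (mem_singleton_self a))

lemma insert_not_mem_erase {s : Finset α} {ρ₀ : Finset (Finset α)} {a : α} {C : Finset α}
    (h : IsPartOn s ρ₀) (ha : a ∉ s) : insert a C ∉ ρ₀.erase C :=
  fun hc => insert_block_not_mem h ha (mem_of_mem_erase hc) rfl

lemma prod_insert_block (σ : ℝ) {s : Finset α} {ρ₀ : Finset (Finset α)} {a : α} {C : Finset α}
    (h : IsPartOn s ρ₀) (ha : a ∉ s) (hC : C ∈ ρ₀) :
    ∏ B ∈ insert (insert a C) (ρ₀.erase C), risingFac (1 - σ) (B.card - 1)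
    = ((C.card : ℝ) - σ) * ∏ B ∈ ρ₀, risingFac (1 - σ) (B.card - 1) := by
  rw [Finset.prod_insert (insert_not_mem_erase h ha)]
  have haC : a ∉ C := fun hc => ha (h.1 C hC hc)
  have hCpos : 1 ≤ C.card := Finset.card_pos.2 (nonempty_iff_ne_empty.2 (blk_ne h hC))
  have hcard : (insert a C).card - 1 = (C.card - 1) + 1 := by
    rw [card_insert_of_notMem haC]
    omega
  rw [hcard, risingFac_succ]
  have : (1 - σ) + ((C.card - 1 : ℕ) : ℝ) = (C.card : ℝ) - σ := by
    rw [Nat.cast_sub hCpos]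
    push_cast
    ring
  rw [this, ← Finset.mul_prod_erase ρ₀ _ hC]
  ring

lemma Ssum_insert_succ (σ : ℝ) {s : Finset α} {a : α} (ha : a ∉ s) (j : ℕ) :
    Ssum σ (insert a s) (j + 1)
    = Ssum σ s j + ((s.card : ℝ) - (j + 1) * σ) * Ssum σ s (j + 1) := by
  rw [Ssum_eq_if, sum_partition_insert s a ha]
  have key : ∀ π' ∈ univ.filter fun π' : Finset (Finset α) => IsPartOn s π',
      ((if (insert {a} π').card = j + 1 then
          ∏ B ∈ insert {a} π', risingFac (1 - σ) (B.card - 1) else 0)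
        + ∑ C ∈ π', (if (insert (insert a C) (π'.erase C)).card = j + 1 then
            ∏ B ∈ insert (insert a C) (π'.erase C), risingFac (1 - σ) (B.card - 1) else 0))
      = (if π'.card = j then ∏ B ∈ π', risingFac (1 - σ) (B.card - 1) else 0)
        + ((s.card : ℝ) - (j + 1) * σ) *
            (if π'.card = j + 1 then ∏ B ∈ π', risingFac (1 - σ) (B.card - 1) else 0) := by
    intro π' hmem
    have hP : IsPartOn s π' := (mem_filter.1 hmem).2
    have h1 : (insert {a} π').card = π'.card + 1 :=
      card_insert_of_notMem (singleton_not_mem_part hP ha)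
    have h2 : ∏ B ∈ insert {a} π', risingFac (1 - σ) (B.card - 1)
        = ∏ B ∈ π', risingFac (1 - σ) (B.card - 1) := by
      rw [Finset.prod_insert (singleton_not_mem_part hP ha)]
      simp [risingFac_zero]
    congr 1
    · rw [h1, h2]
      congr 1
      simp [Nat.succ_inj]
    · have h3 : ∀ C ∈ π', (insert (insert a C) (π'.erase C)).card = π'.card := by
        intro C hC
        rw [card_insert_of_notMem (insert_not_mem_erase hP ha), card_erase_of_mem hC]
        have : 1 ≤ π'.card := Finset.card_pos.2 ⟨C, hC⟩
        omega
      by_cases hc : π'.card = j + 1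
      · rw [if_pos hc]
        have : ∀ C ∈ π', (if (insert (insert a C) (π'.erase C)).card = j + 1 then
            ∏ B ∈ insert (insert a C) (π'.erase C), risingFac (1 - σ) (B.card - 1) else 0)
            = ((C.card : ℝ) - σ) * ∏ B ∈ π', risingFac (1 - σ) (B.card - 1) := by
          intro C hC
          rw [h3 C hC, if_pos hc, prod_insert_block σ hP ha hC]
        rw [Finset.sum_congr rfl this, ← Finset.sum_mul]
        congr 1
        rw [Finset.sum_sub_distrib]
        have : ∑ C ∈ π', ((C.card : ℕ) : ℝ) = (s.card : ℝ) := by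
          rw [← Nat.cast_sum, sum_card_blocks hP]
        rw [this, Finset.sum_const, hc]
        push_cast
        ring
      · rw [if_neg hc]
        rw [Finset.sum_eq_zero, mul_zero]
        intro C hC
        rw [h3 C hC, if_neg hc]
  rw [Finset.sum_congr rfl key, Finset.sum_add_distrib, ← Finset.mul_sum,
    ← Ssum_eq_if, ← Ssum_eq_if]

lemma Ssum_cgfc (σ : ℝ) (s : Finset α) (j : ℕ) :
    σ ^ j * Ssum σ s j = cgfc s.card j σ := by
  induction s using Finset.induction_on generalizing j with
  | empty =>
    rw [Ssum_empty, card_empty, cgfc_zero_left]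
    rcases Nat.eq_zero_or_pos j with rfl | hj
    · simp
    · simp [Nat.pos_iff_ne_zero.1 hj]
  | insert a s ha ih =>
    rcases j with _ | j
    · rw [Ssum_zero_blocks σ (insert_nonempty a s), cgfc_zero_right]
      rw [if_neg (by simp [card_insert_of_notMem ha])]
      ring
    · rw [Ssum_insert_succ σ ha, card_insert_of_notMem ha, cgfc_succ, ← ih j, ← ih (j+1)]
      push_cast
      ring


lemma erase_isPartOn {s : Finset α} {π' : Finset (Finset α)} (h : IsPartOn s π')
    {B : Finset α} (hB : B ∈ π') : IsPartOn (s \ B) (π'.erase B) := by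
  refine ⟨?_, fun hc => h.2.1 (mem_of_mem_erase hc), ?_⟩
  · intro C hC x hx
    rw [mem_sdiff]
    refine ⟨h.1 C (mem_of_mem_erase hC) hx, fun hxB => ?_⟩
    exact ne_of_mem_erase hC (blk_eq h (mem_of_mem_erase hC) hB hx hxB)
  · intro b hb
    rw [mem_sdiff] at hb
    obtain ⟨D, ⟨hD, hbD⟩, hu⟩ := h.2.2 b hb.1
    have hDB : D ≠ B := fun e => hb.2 (e ▸ hbD)
    refine ⟨D, ⟨mem_erase.2 ⟨hDB, hD⟩, hbD⟩, ?_⟩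
    rintro D' ⟨hD', hbD'⟩
    exact hu D' ⟨mem_of_mem_erase hD', hbD'⟩

lemma not_mem_sdiff_part {s B : Finset α} {π'' : Finset (Finset α)}
    (h : IsPartOn (s \ B) π'') (hBne : B ≠ ∅) : B ∉ π'' := by
  intro hc
  obtain ⟨x, hx⟩ := nonempty_iff_ne_empty.2 hBne
  exact (mem_sdiff.1 (h.1 B hc hx)).2 hx

lemma insert_isPartOn_sdiff {s B : Finset α} {π'' : Finset (Finset α)}
    (hBs : B ⊆ s) (hBne : B ≠ ∅) (h : IsPartOn (s \ B) π'') : IsPartOn s (insert B π'') := by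
  refine ⟨?_, ?_, ?_⟩
  · intro C hC
    rcases mem_insert.1 hC with rfl | hC
    · exact hBs
    · exact (h.1 C hC).trans sdiff_subset
  · intro hc
    rcases mem_insert.1 hc with e | hc
    · exact hBne e.symm
    · exact h.2.1 hc
  · intro b hb
    by_cases hbB : b ∈ B
    · refine ⟨B, ⟨mem_insert_self _ _, hbB⟩, ?_⟩
      rintro C ⟨hC, hbC⟩
      rcases mem_insert.1 hC with rfl | hC
      · rfl
      · exact absurd ((mem_sdiff.1 (h.1 C hC hbC)).2) (fun hn => hn hbB)
    · obtain ⟨D, ⟨hD, hbD⟩, hu⟩ := h.2.2 b (mem_sdiff.2 ⟨hb, hbB⟩)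
      refine ⟨D, ⟨mem_insert_of_mem hD, hbD⟩, ?_⟩
      rintro C ⟨hC, hbC⟩
      rcases mem_insert.1 hC with rfl | hC
      · exact absurd hbC hbB
      · exact hu C ⟨hC, hbC⟩

lemma sum_part_block (s : Finset α) (j : ℕ) (g : Finset α → ℝ) (h : Finset α → ℝ) :
    (∑ π' ∈ univ.filter fun π' => IsPartOn s π' ∧ π'.card = j + 1,
      ∑ B ∈ π', g B * ∏ B' ∈ π', h B')
    = ∑ B ∈ s.powerset.filter fun B => B ≠ ∅,
        g B * h B * ∑ π'' ∈ univ.filter fun π'' => IsPartOn (s \ B) π'' ∧ π''.card = j,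
          ∏ B' ∈ π'', h B' := by
  have hR : (∑ B ∈ s.powerset.filter fun B => B ≠ ∅,
        g B * h B * ∑ π'' ∈ univ.filter fun π'' => IsPartOn (s \ B) π'' ∧ π''.card = j,
          ∏ B' ∈ π'', h B')
      = ∑ p ∈ (s.powerset.filter fun B => B ≠ ∅).sigma
            (fun B => univ.filter fun π'' => IsPartOn (s \ B) π'' ∧ π''.card = j),
          g p.1 * h p.1 * ∏ B' ∈ p.2, h B' := by
    rw [Finset.sum_sigma]
    exact sum_congr rfl fun B _ => by rw [Finset.mul_sum]
  have hL : (∑ π' ∈ univ.filter fun π' => IsPartOn s π' ∧ π'.card = j + 1,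
      ∑ B ∈ π', g B * ∏ B' ∈ π', h B')
      = ∑ p ∈ (univ.filter fun π' : Finset (Finset α) =>
            IsPartOn s π' ∧ π'.card = j + 1).sigma (fun π' => π'),
          g p.2 * ∏ B' ∈ p.1, h B' := by
    rw [Finset.sum_sigma]
  rw [hL, hR]
  refine Finset.sum_nbij' (i := fun p => (⟨p.2, p.1.erase p.2⟩ :
      Σ _ : Finset α, Finset (Finset α)))
    (j := fun q => (⟨insert q.1 q.2, q.1⟩ : Σ _ : Finset (Finset α), Finset α))
    ?_ ?_ ?_ ?_ ?_
  · rintro ⟨π', B⟩ hp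
    rw [Finset.mem_sigma] at hp
    obtain ⟨hπ'mem, hBmem⟩ := hp
    obtain ⟨hπ', hcard⟩ := (mem_filter.1 hπ'mem).2
    rw [Finset.mem_sigma]
    dsimp only
    constructor
    · rw [mem_filter, mem_powerset]
      exact ⟨hπ'.1 B hBmem, blk_ne hπ' hBmem⟩
    · rw [mem_filter]
      refine ⟨mem_univ _, erase_isPartOn hπ' hBmem, ?_⟩
      rw [card_erase_of_mem hBmem, hcard]
      omega
  · rintro ⟨B, π''⟩ hq
    rw [Finset.mem_sigma] at hq
    obtain ⟨hBmem, hπ''mem⟩ := hq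
    obtain ⟨hBs, hBne⟩ := mem_filter.1 hBmem
    rw [mem_powerset] at hBs
    obtain ⟨hπ'', hcard⟩ := (mem_filter.1 hπ''mem).2
    rw [Finset.mem_sigma]
    dsimp only
    constructor
    · rw [mem_filter]
      refine ⟨mem_univ _, insert_isPartOn_sdiff hBs hBne hπ'', ?_⟩
      rw [card_insert_of_notMem (not_mem_sdiff_part hπ'' hBne), hcard]
    · exact mem_insert_self _ _
  · rintro ⟨π', B⟩ hp
    rw [Finset.mem_sigma] at hp
    dsimp only
    simp [insert_erase hp.2]
  · rintro ⟨B, π''⟩ hq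
    rw [Finset.mem_sigma] at hq
    obtain ⟨hBmem, hπ''mem⟩ := hq
    obtain ⟨-, hBne⟩ := mem_filter.1 hBmem
    obtain ⟨hπ'', -⟩ := (mem_filter.1 hπ''mem).2
    dsimp only
    simp [erase_insert (not_mem_sdiff_part hπ'' hBne)]
  · rintro ⟨π', B⟩ hp
    rw [Finset.mem_sigma] at hp
    obtain ⟨hπ'mem, hBmem⟩ := hp
    obtain ⟨hπ', -⟩ := (mem_filter.1 hπ'mem).2
    dsimp only
    rw [← Finset.mul_prod_erase π' h hBmem]
    ring

lemma isPartOn_singleton_part {s : Finset α} (hs : s.Nonempty) : IsPartOn s ({s} : Finset (Finset α)) := by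
  refine ⟨?_, ?_, ?_⟩
  · intro B hB
    rw [mem_singleton] at hB
    subst hB
    exact subset_rfl
  · rw [mem_singleton]
    exact fun e => (nonempty_iff_ne_empty.1 hs) e.symm
  · intro a ha
    refine ⟨s, ⟨mem_singleton_self s, ha⟩, ?_⟩
    rintro B ⟨hB, -⟩
    exact mem_singleton.1 hB

lemma exists_partsJ : ∀ (j : ℕ) (s : Finset α), 1 ≤ j → j ≤ s.card →
    ∃ π' : Finset (Finset α), IsPartOn s π' ∧ π'.card = j := by
  intro j
  induction j with
  | zero => intro s h1; omega
  | succ j ih =>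
    intro s h1 hle
    rcases Nat.eq_zero_or_pos j with rfl | hj
    · have hs : s.Nonempty := Finset.card_pos.1 (by omega)
      exact ⟨{s}, isPartOn_singleton_part hs, Finset.card_singleton s⟩
    · have hs : s.Nonempty := Finset.card_pos.1 (by omega)
      obtain ⟨a, ha⟩ := hs
      obtain ⟨π', hπ', hc⟩ := ih (s.erase a) hj (by rw [card_erase_of_mem ha]; omega)
      refine ⟨insert {a} π', ?_, ?_⟩
      · have := isPartOn_insert_singleton hπ' (notMem_erase a s)
        rwa [insert_erase ha] at this
      · rw [card_insert_of_notMem (singleton_not_mem_part hπ' (notMem_erase a s)), hc]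

lemma Ssum_pos {σ : ℝ} (hσ : σ < 1) {s : Finset α} {j : ℕ} (h1 : 1 ≤ j) (hle : j ≤ s.card) :
    0 < Ssum σ s j := by
  unfold Ssum
  apply Finset.sum_pos
  · intro π' _
    exact Finset.prod_pos fun B _ => risingFac_pos (by linarith) _
  · obtain ⟨π', hπ'⟩ := exists_partsJ j s h1 hle
    exact ⟨π', mem_filter.2 ⟨mem_univ _, hπ'⟩⟩


def wW (σ θ : ℝ) (ρ : Finset (Finset α)) : ℝ :=
  (∏ i ∈ Finset.range ρ.card, (θ + (i : ℝ) * σ)) * ∏ C ∈ ρ, risingFac (1 - σ) (C.card - 1)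

lemma wW_insert_singleton (σ θ : ℝ) {X : Finset α} {ρ₀ : Finset (Finset α)} {a : α}
    (h : IsPartOn X ρ₀) (ha : a ∉ X) :
    wW σ θ (insert {a} ρ₀) = (θ + (ρ₀.card : ℝ) * σ) * wW σ θ ρ₀ := by
  unfold wW
  rw [card_insert_of_notMem (singleton_not_mem_part h ha), Finset.prod_range_succ,
    Finset.prod_insert (singleton_not_mem_part h ha)]
  simp only [Finset.card_singleton, Nat.sub_self, risingFac_zero]
  ring

lemma wW_insert_block (σ θ : ℝ) {X : Finset α} {ρ₀ : Finset (Finset α)} {a : α} {C : Finset α}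
    (h : IsPartOn X ρ₀) (ha : a ∉ X) (hC : C ∈ ρ₀) :
    wW σ θ (insert (insert a C) (ρ₀.erase C)) = ((C.card : ℝ) - σ) * wW σ θ ρ₀ := by
  unfold wW
  have hcard : (insert (insert a C) (ρ₀.erase C)).card = ρ₀.card := by
    rw [card_insert_of_notMem (insert_not_mem_erase h ha), card_erase_of_mem hC]
    have : 1 ≤ ρ₀.card := Finset.card_pos.2 ⟨C, hC⟩
    omega
  rw [hcard, prod_insert_block σ h ha hC]
  ring

def QL (s B₀ : Finset α) (l : ℕ) (ρ : Finset (Finset α)) : Prop :=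
  ∃ C ∈ ρ, B₀ ⊆ C ∧ (C \ s).card = l

lemma keyB_pointwise (σ θ : ℝ) {s T : Finset α} {π' : Finset (Finset α)}
    (hπ : IsPartOn s π') {B₀ : Finset α} (hB₀ : B₀ ∈ π')
    (hdisj : Disjoint T s) {a : α} (has : a ∉ s) (haX : a ∉ s ∪ T) (l : ℕ)
    {ρ₀ : Finset (Finset α)} (hρ₀ : IsPartOn (s ∪ T) ρ₀) :
    ((if restrictPart (insert {a} ρ₀) s = π' then
        (if QL s B₀ l (insert {a} ρ₀) then wW σ θ (insert {a} ρ₀) else 0) else 0)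
      + ∑ C ∈ ρ₀, (if restrictPart (insert (insert a C) (ρ₀.erase C)) s = π' then
          (if QL s B₀ l (insert (insert a C) (ρ₀.erase C)) then
            wW σ θ (insert (insert a C) (ρ₀.erase C)) else 0) else 0))
    = if restrictPart ρ₀ s = π' then
        ((θ + (s.card : ℝ) + (T.card : ℝ) - ((B₀.card : ℝ) + (l : ℝ)) + σ) *
            (if QL s B₀ l ρ₀ then wW σ θ ρ₀ else 0)
          + ((B₀.card : ℝ) + (l : ℝ) - 1 - σ) *
            (if l ≠ 0 ∧ QL s B₀ (l - 1) ρ₀ then wW σ θ ρ₀ else 0)) else 0 := by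
  by_cases hres : restrictPart ρ₀ s = π'
  swap
  · rw [if_neg hres, if_neg (by rwa [restrictPart_insert_singleton has]),
      Finset.sum_eq_zero, add_zero]
    intro C hC
    rw [if_neg (by rwa [restrictPart_insert_block has hC])]
  · rw [if_pos hres, if_pos (by rwa [restrictPart_insert_singleton has])]
    -- the container block of B₀
    have hB₀mem' : B₀ ∈ restrictPart ρ₀ s := hres ▸ hB₀
    obtain ⟨-, D₀, hD₀mem, hD₀cap⟩ := mem_restrictPart.1 hB₀mem'
    have hB₀sub : B₀ ⊆ D₀ := by rw [← hD₀cap]; exact inter_subset_left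
    have hB₀ne : B₀.Nonempty := nonempty_iff_ne_empty.2 (blk_ne hπ hB₀)
    have hB₀s : B₀ ⊆ s := hπ.1 B₀ hB₀
    set c := (D₀ \ s).card with hc
    have hQiff : ∀ l' : ℕ, QL s B₀ l' ρ₀ ↔ c = l' := by
      intro l'
      constructor
      · rintro ⟨C, hC, hsub, hcard⟩
        rw [← hcard, hc]
        congr 2
        exact (blk_sub_eq hρ₀ hD₀mem hC hB₀ne hB₀sub hsub)
      · intro h'
        exact ⟨D₀, hD₀mem, hB₀sub, h'⟩
    have hD₀card : (D₀.card : ℕ) = B₀.card + c := by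
      rw [hc, ← hD₀cap]
      exact (Finset.card_inter_add_card_sdiff D₀ s).symm
    have haD₀ : a ∉ D₀ := fun h => haX (hρ₀.1 D₀ hD₀mem h)
    have haB₀ : a ∉ B₀ := fun h => has (hB₀s h)
    -- QL for the singleton insertion
    have hQsing : QL s B₀ l (insert {a} ρ₀) ↔ QL s B₀ l ρ₀ := by
      constructor
      · rintro ⟨C, hC, hsub, hcard⟩
        rcases mem_insert.1 hC with rfl | hC
        · obtain ⟨x, hx⟩ := hB₀ne
          rw [mem_singleton.1 (hsub hx)] at hx
          exact absurd hx haB₀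
        · exact ⟨C, hC, hsub, hcard⟩
      · rintro ⟨C, hC, hsub, hcard⟩
        exact ⟨C, mem_insert_of_mem hC, hsub, hcard⟩
    -- QL for the block insertions
    have hQD₀ : QL s B₀ l (insert (insert a D₀) (ρ₀.erase D₀)) ↔ c + 1 = l := by
      have hnewcard : ((insert a D₀) \ s).card = c + 1 := by
        rw [insert_sdiff_of_notMem _ has,
          card_insert_of_notMem (fun hx => haD₀ (mem_sdiff.1 hx).1)]
      constructor
      · rintro ⟨C', hC', hsub, hcard⟩
        rcases mem_insert.1 hC' with rfl | hC'
        · rw [← hcard, hnewcard]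
        · exact absurd (blk_sub_eq hρ₀ (mem_of_mem_erase hC') hD₀mem hB₀ne hsub hB₀sub)
            (ne_of_mem_erase hC')
      · intro h'
        exact ⟨insert a D₀, mem_insert_self _ _,
          hB₀sub.trans (subset_insert a D₀), hnewcard.trans h'⟩
    have hQblk : ∀ C ∈ ρ₀.erase D₀,
        QL s B₀ l (insert (insert a C) (ρ₀.erase C)) ↔ c = l := by
      intro C hCe
      have hC : C ∈ ρ₀ := mem_of_mem_erase hCe
      have hCD : C ≠ D₀ := ne_of_mem_erase hCe
      constructor
      · rintro ⟨C', hC', hsub, hcard⟩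
        rcases mem_insert.1 hC' with rfl | hC'
        · have hsubC : B₀ ⊆ C := by
            intro x hx
            rcases mem_insert.1 (hsub hx) with rfl | hxC
            · exact absurd hx haB₀
            · exact hxC
          exact absurd (blk_sub_eq hρ₀ hC hD₀mem hB₀ne hsubC hB₀sub) hCD
        · rw [← hcard, hc]
          congr 2
          exact blk_sub_eq hρ₀ hD₀mem (mem_of_mem_erase hC') hB₀ne hB₀sub hsub
      · intro h'
        exact ⟨D₀, mem_insert_of_mem (mem_erase.2 ⟨fun e => hCD e.symm, hD₀mem⟩),
          hB₀sub, h'⟩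
    -- evaluate the sum over C
    have hsum : ∑ C ∈ ρ₀, (if restrictPart (insert (insert a C) (ρ₀.erase C)) s = π' then
          (if QL s B₀ l (insert (insert a C) (ρ₀.erase C)) then
            wW σ θ (insert (insert a C) (ρ₀.erase C)) else 0) else 0)
        = (if c + 1 = l then ((D₀.card : ℝ) - σ) * wW σ θ ρ₀ else 0)
          + (if c = l then
              (((s.card : ℝ) + (T.card : ℝ)) - (ρ₀.card : ℝ) * σ - ((D₀.card : ℝ) - σ)) *
                wW σ θ ρ₀ else 0) := by
      have hper : ∀ C ∈ ρ₀, (if restrictPart (insert (insert a C) (ρ₀.erase C)) s = π' then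
          (if QL s B₀ l (insert (insert a C) (ρ₀.erase C)) then
            wW σ θ (insert (insert a C) (ρ₀.erase C)) else 0) else 0)
          = (if QL s B₀ l (insert (insert a C) (ρ₀.erase C)) then
              ((C.card : ℝ) - σ) * wW σ θ ρ₀ else 0) := by
        intro C hC
        rw [if_pos (by rwa [restrictPart_insert_block has hC]), wW_insert_block σ θ hρ₀ haX hC]
      rw [Finset.sum_congr rfl hper, ← Finset.add_sum_erase ρ₀ _ hD₀mem]
      congr 1
      · rw [if_congr hQD₀ rfl rfl]
      · have hper2 : ∀ C ∈ ρ₀.erase D₀,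
            (if QL s B₀ l (insert (insert a C) (ρ₀.erase C)) then
              ((C.card : ℝ) - σ) * wW σ θ ρ₀ else 0)
            = (if c = l then ((C.card : ℝ) - σ) * wW σ θ ρ₀ else 0) := by
          intro C hCe
          rw [if_congr (hQblk C hCe) rfl rfl]
        rw [Finset.sum_congr rfl hper2]
        by_cases hcl : c = l
        · simp only [if_pos hcl]
          rw [← Finset.sum_mul]
          congr 1
          rw [Finset.sum_sub_distrib]
          have h1 : ∑ C ∈ ρ₀.erase D₀, ((C.card : ℕ) : ℝ)
              = ((s.card : ℝ) + (T.card : ℝ)) - (D₀.card : ℝ) := by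
            rw [Finset.sum_erase_eq_sub hD₀mem, ← Nat.cast_sum, sum_card_blocks hρ₀,
              card_union_of_disjoint hdisj.symm]
            push_cast
            ring
          rw [h1, Finset.sum_const, card_erase_of_mem hD₀mem, nsmul_eq_mul]
          have : 1 ≤ ρ₀.card := Finset.card_pos.2 ⟨D₀, hD₀mem⟩
          rw [Nat.cast_sub this]
          push_cast
          ring
        · simp [hcl]
    rw [hsum, if_congr hQsing rfl rfl, wW_insert_singleton σ θ hρ₀ haX]
    -- combine
    have hc1 : (if c + 1 = l then ((D₀.card : ℝ) - σ) * wW σ θ ρ₀ else 0)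
        = ((B₀.card : ℝ) + (l : ℝ) - 1 - σ) *
            (if l ≠ 0 ∧ QL s B₀ (l - 1) ρ₀ then wW σ θ ρ₀ else 0) := by
      by_cases h' : c + 1 = l
      · rw [if_pos h', if_pos ⟨by omega, (hQiff (l-1)).2 (by omega)⟩]
        have hcR : (c : ℝ) + 1 = (l : ℝ) := by
          exact_mod_cast congrArg (Nat.cast : ℕ → ℝ) h'
        have hDR : (D₀.card : ℝ) = (B₀.card : ℝ) + (c : ℝ) := by
          exact_mod_cast congrArg (Nat.cast : ℕ → ℝ) hD₀card
        rw [hDR]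
        linear_combination (wW σ θ ρ₀) * hcR
      · rw [if_neg h', if_neg, mul_zero]
        rintro ⟨hl0, hQ⟩
        exact h' (by have := (hQiff (l-1)).1 hQ; omega)
    have hc2 : (θ + (ρ₀.card : ℝ) * σ) * (if QL s B₀ l ρ₀ then wW σ θ ρ₀ else 0)
          + (if c = l then
              (((s.card : ℝ) + (T.card : ℝ)) - (ρ₀.card : ℝ) * σ - ((D₀.card : ℝ) - σ)) *
                wW σ θ ρ₀ else 0)
        = (θ + (s.card : ℝ) + (T.card : ℝ) - ((B₀.card : ℝ) + (l : ℝ)) + σ) *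
            (if QL s B₀ l ρ₀ then wW σ θ ρ₀ else 0) := by
      by_cases hcl : c = l
      · rw [if_pos hcl, if_pos ((hQiff l).2 hcl)]
        have hD : (D₀.card : ℝ) = (B₀.card : ℝ) + (l : ℝ) := by
          have hn : (D₀.card : ℕ) = B₀.card + l := by omega
          exact_mod_cast congrArg (Nat.cast : ℕ → ℝ) hn
        rw [hD]
        ring
      · rw [if_neg hcl, if_neg (fun h => hcl ((hQiff l).1 h))]
        ring
    rw [← hc2, ← hc1]
    split_ifs <;> ring


lemma rising_choose_step (x y : ℝ) (t l : ℕ) :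
    (x + (t : ℝ) - ((l : ℝ) + 1)) *
        ((t.choose (l+1) : ℝ) * risingFac y (l+1) * risingFac x (t - (l+1)))
      + (y + (l : ℝ)) * ((t.choose l : ℝ) * risingFac y l * risingFac x (t - l))
    = (((t+1).choose (l+1) : ℝ) * risingFac y (l+1) * risingFac x (t + 1 - (l+1))) := by
  rcases lt_trichotomy t l with h | rfl | h
  · rw [Nat.choose_eq_zero_of_lt (by omega), Nat.choose_eq_zero_of_lt h,
      Nat.choose_eq_zero_of_lt (by omega)]
    push_cast
    ring
  · rw [Nat.choose_eq_zero_of_lt (by omega), Nat.choose_self, Nat.choose_self,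
      Nat.sub_self, show t + 1 - (t+1) = 0 by omega, risingFac_zero,
      risingFac_succ]
    push_cast
    ring
  · have h1 : t - (l+1) + 1 = t - l := by omega
    have h2 : t + 1 - (l+1) = t - l := by omega
    have hcast : ((t - (l+1) : ℕ) : ℝ) = (t : ℝ) - (l : ℝ) - 1 := by
      rw [Nat.cast_sub (by omega : l + 1 ≤ t)]
      push_cast
      ring
    have hch : (((t+1).choose (l+1) : ℕ) : ℝ) = (t.choose (l+1) : ℝ) + (t.choose l : ℝ) := by
      rw [Nat.choose_succ_succ]
      push_cast
      ring
    rw [h2, ← h1, risingFac_succ y l, risingFac_succ x (t - (l+1)), hch, hcast]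
    ring

lemma keyB (σ θ : ℝ) {s : Finset α} {π' : Finset (Finset α)} (hπ : IsPartOn s π')
    {B₀ : Finset α} (hB₀ : B₀ ∈ π') :
    ∀ (T : Finset α), Disjoint T s → ∀ l : ℕ,
    (∑ ρ ∈ univ.filter fun ρ => IsPartOn (s ∪ T) ρ ∧ restrictPart ρ s = π',
      (if QL s B₀ l ρ then wW σ θ ρ else 0))
    = wW σ θ π' * (T.card.choose l : ℝ) * risingFac ((B₀.card : ℝ) - σ) l *
        risingFac (θ + (s.card : ℝ) - (B₀.card : ℝ) + σ) (T.card - l) := by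
  have hB₀ne : B₀.Nonempty := nonempty_iff_ne_empty.2 (blk_ne hπ hB₀)
  have hB₀empty : B₀ \ s = ∅ := sdiff_eq_empty_iff_subset.2 (hπ.1 B₀ hB₀)
  intro T
  induction T using Finset.induction_on with
  | empty =>
    intro hdisj l
    have hset : (univ.filter fun ρ => IsPartOn (s ∪ ∅) ρ ∧ restrictPart ρ s = π')
        = {π'} := by
      ext ρ
      simp only [union_empty, mem_filter, mem_univ, true_and, mem_singleton]
      constructor
      · rintro ⟨hP, hre⟩
        rw [← hre, restrictPart_self hP]
      · rintro rfl
        exact ⟨hπ, restrictPart_self hπ⟩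
    rw [hset, Finset.sum_singleton]
    have hQiff : QL s B₀ l π' ↔ l = 0 := by
      constructor
      · rintro ⟨C, hC, hsub, hcard⟩
        have hCB : C = B₀ := blk_sub_eq hπ hC hB₀ hB₀ne hsub (subset_refl B₀)
        rw [← hcard, hCB, hB₀empty, card_empty]
      · rintro rfl
        exact ⟨B₀, hB₀, subset_refl B₀, by rw [hB₀empty, card_empty]⟩
    rcases Nat.eq_zero_or_pos l with rfl | hl
    · rw [if_pos (hQiff.2 rfl)]
      simp [risingFac_zero]
    · rw [if_neg (fun h => absurd (hQiff.1 h) (by omega)), card_empty]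
      rw [Nat.choose_eq_zero_of_lt hl]
      push_cast
      ring
  | insert a T ha ih =>
    intro hdisj l
    have has : a ∉ s := Finset.disjoint_left.1 hdisj (mem_insert_self a T)
    have hdisjT : Disjoint T s := hdisj.mono_left (subset_insert a T)
    have haX : a ∉ s ∪ T := by
      rw [mem_union]
      rintro (h | h)
      · exact has h
      · exact ha h
    have hconv : ∀ (X : Finset α) (l' : ℕ),
        (∑ ρ ∈ univ.filter fun ρ => IsPartOn X ρ ∧ restrictPart ρ s = π',
          (if QL s B₀ l' ρ then wW σ θ ρ else 0))
        = ∑ ρ ∈ univ.filter fun ρ => IsPartOn X ρ,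
            (if restrictPart ρ s = π' then (if QL s B₀ l' ρ then wW σ θ ρ else 0) else 0) := by
      intro X l'
      rw [← Finset.filter_filter, Finset.sum_filter]
    rw [hconv, Finset.union_insert, sum_partition_insert (s ∪ T) a haX,
      Finset.sum_congr rfl (fun ρ₀ hρ₀ => keyB_pointwise σ θ hπ hB₀ hdisjT has haX l
        ((mem_filter.1 hρ₀).2))]
    have hsplit : ∀ ρ₀ : Finset (Finset α),
        (if restrictPart ρ₀ s = π' then
          ((θ + (s.card : ℝ) + (T.card : ℝ) - ((B₀.card : ℝ) + (l : ℝ)) + σ) *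
              (if QL s B₀ l ρ₀ then wW σ θ ρ₀ else 0)
            + ((B₀.card : ℝ) + (l : ℝ) - 1 - σ) *
              (if l ≠ 0 ∧ QL s B₀ (l - 1) ρ₀ then wW σ θ ρ₀ else 0)) else 0)
        = (θ + (s.card : ℝ) + (T.card : ℝ) - ((B₀.card : ℝ) + (l : ℝ)) + σ) *
            (if restrictPart ρ₀ s = π' then (if QL s B₀ l ρ₀ then wW σ θ ρ₀ else 0) else 0)
          + ((B₀.card : ℝ) + (l : ℝ) - 1 - σ) *
            (if restrictPart ρ₀ s = π' then
              (if l ≠ 0 ∧ QL s B₀ (l - 1) ρ₀ then wW σ θ ρ₀ else 0) else 0) := by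
      intro ρ₀
      by_cases h : restrictPart ρ₀ s = π' <;> simp [h]
    rw [Finset.sum_congr rfl (fun ρ₀ _ => hsplit ρ₀), Finset.sum_add_distrib,
      ← Finset.mul_sum, ← Finset.mul_sum, ← hconv, ih hdisjT l]
    rcases l with _ | l'
    · have hzero : ∀ ρ₀ : Finset (Finset α),
          (if restrictPart ρ₀ s = π' then
            (if (0 : ℕ) ≠ 0 ∧ QL s B₀ (0 - 1) ρ₀ then wW σ θ ρ₀ else 0) else 0) = 0 := by
        intro ρ₀
        by_cases h : restrictPart ρ₀ s = π' <;> simp [h]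
      rw [Finset.sum_congr rfl (fun ρ₀ _ => hzero ρ₀), Finset.sum_const, smul_zero, mul_zero,
        add_zero, card_insert_of_notMem ha]
      rw [Nat.choose_zero_right, Nat.choose_zero_right, risingFac_zero, Nat.sub_zero,
        Nat.sub_zero, risingFac_succ]
      push_cast
      ring
    · have hconv2 : ∀ ρ₀ : Finset (Finset α),
          (if restrictPart ρ₀ s = π' then
            (if (l' + 1 : ℕ) ≠ 0 ∧ QL s B₀ (l' + 1 - 1) ρ₀ then wW σ θ ρ₀ else 0) else 0)
          = (if restrictPart ρ₀ s = π' then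
              (if QL s B₀ l' ρ₀ then wW σ θ ρ₀ else 0) else 0) := by
        intro ρ₀
        have : ((l' + 1 : ℕ) ≠ 0 ∧ QL s B₀ (l' + 1 - 1) ρ₀) ↔ QL s B₀ l' ρ₀ := by
          simp
        rw [if_congr Iff.rfl (if_congr this rfl rfl) rfl]
      rw [Finset.sum_congr rfl (fun ρ₀ _ => hconv2 ρ₀), ← hconv, ih hdisjT l',
        card_insert_of_notMem ha]
      push_cast
      have hstep := rising_choose_step (θ + (s.card : ℝ) - (B₀.card : ℝ) + σ)
        ((B₀.card : ℝ) - σ) T.card l'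
      rw [show T.card + 1 - (l' + 1) = T.card - l' from by omega] at hstep
      linear_combination (wW σ θ π') * hstep


lemma sum_powerset_ne_empty (s : Finset α) (f : ℕ → ℝ) :
    ∑ B ∈ s.powerset.filter (fun B => B ≠ ∅), f B.card
    = ∑ t ∈ Finset.Icc 1 s.card, (s.card.choose t : ℝ) * f t := by
  rw [Finset.sum_filter, Finset.powerset_card_biUnion, Finset.sum_biUnion]
  · have h1 : ∀ i ∈ Finset.range (s.card + 1),
        (∑ B ∈ Finset.powersetCard i s, (if B ≠ ∅ then f B.card else 0))
        = (if i ≠ 0 then (s.card.choose i : ℝ) * f i else 0) := by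
      intro i hi
      have h2 : ∀ B ∈ Finset.powersetCard i s,
          (if B ≠ ∅ then f B.card else 0) = (if i ≠ 0 then f i else 0) := by
        intro B hB
        obtain ⟨-, hcard⟩ := Finset.mem_powersetCard.1 hB
        subst hcard
        simp only [Ne, Finset.card_eq_zero]
      rw [Finset.sum_congr rfl h2, Finset.sum_const, Finset.card_powersetCard, nsmul_eq_mul]
      split_ifs
      · ring
      · ring
    rw [Finset.sum_congr rfl h1, ← Finset.sum_filter]
    congr 1
    ext i
    simp only [Finset.mem_filter, Finset.mem_range, Finset.mem_Icc]
    omega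
  · intro x hx y hy hxy
    simp only [Function.onFun]
    rw [Finset.disjoint_left]
    intro B hBx hBy
    exact hxy (((Finset.mem_powersetCard.1 hBx).2.symm).trans
      (Finset.mem_powersetCard.1 hBy).2)

lemma cgfc_one_eq {t : ℕ} (ht : 1 ≤ t) (x : ℝ) :
    cgfc t 1 x = - risingFac (-x) t := by
  unfold cgfc gfc
  rw [show (1:ℕ) + 1 = 2 from rfl, Finset.sum_range_succ, Finset.sum_range_one]
  have h0 : -((0:ℕ) : ℝ) * x - 0 = 0 := by push_cast; ring
  have h1 : -((1:ℕ) : ℝ) * x - 0 = -x := by push_cast; ring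
  rw [h0, h1, risingFac_zero_arg ht]
  simp [Nat.factorial]

lemma rise_swap (σ : ℝ) {t l : ℕ} (ht : 1 ≤ t) (hl : 1 ≤ l) :
    risingFac (1 - σ) (t - 1) * risingFac ((t : ℝ) - σ) l
    = risingFac (1 - σ) (l - 1) * risingFac ((l : ℝ) - σ) t := by
  have h1 : risingFac (1 - σ) ((t - 1) + l) = risingFac (1 - σ) (t-1) * risingFac ((t:ℝ) - σ) l := by
    rw [risingFac_add]
    congr 2
    rw [Nat.cast_sub ht]
    push_cast
    ring
  have h2 : risingFac (1 - σ) ((l - 1) + t) = risingFac (1 - σ) (l-1) * risingFac ((l:ℝ) - σ) t := by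
    rw [risingFac_add]
    congr 2
    rw [Nat.cast_sub hl]
    push_cast
    ring
  rw [← h1, ← h2]
  congr 1
  omega

end Aux

/-- Ewens–Pitman, expected number of old species re-observed with
frequency `l`, given only the number of blocks. -/
theorem looking_backward_freq_estimator_incomplete_EP
    (n m j : ℕ) (hn : 1 ≤ n) (hm : 1 ≤ m) (hj1 : 1 ≤ j) (hjn : j ≤ n)
    (σ θ : ℝ) (hσ0 : 0 < σ) (hσ1 : σ < 1) (hθ : -σ < θ)
    (hVnj : 0 < EPV σ θ n j)
    (l : ℕ) (hl1 : 1 ≤ l) (hlm : l ≤ m) :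
    condExpK σ (EPV σ θ) n m j (fun ρ => (Rlcnt n m l ρ : ℝ)) =
      (1 / (cgfc n j σ * risingFac (θ + n) m)) * (Nat.choose m l : ℝ) *
        (-σ * risingFac (1 - σ) (l - 1)) *
        ∑ s ∈ Finset.Icc 1 (n - (j - 1)),
          (Nat.choose n s : ℝ) * risingFac (θ + (n : ℝ) - (s : ℝ) + σ) (m - l) *
            cgfc s 1 (σ - l) * cgfc (n - s) (j - 1) σ := by
  classical
  obtain ⟨j', rfl⟩ : ∃ j'', j = j'' + 1 := ⟨j - 1, by omega⟩
  simp only [Nat.add_sub_cancel]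
  have hold_card : (oldSet n m).card = n := by
    have hbij : (oldSet n m).card = (Finset.range n).card := by
      refine Finset.card_bij' (fun x _ => (x : ℕ))
        (fun t ht => (⟨t, by have := Finset.mem_range.1 ht; omega⟩ : Fin (n+m)))
        ?_ ?_ ?_ ?_
      · intro x hx
        exact Finset.mem_range.2 ((Finset.mem_filter.1 hx).2)
      · intro t ht
        exact Finset.mem_filter.2 ⟨Finset.mem_univ _, Finset.mem_range.1 ht⟩
      · intro x hx
        exact Fin.ext rfl
      · intro t ht
        rfl
    rw [hbij, Finset.card_range]
  set nw : Finset (Fin (n+m)) := Finset.univ \ oldSet n m with hnw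
  have huniv : oldSet n m ∪ nw = Finset.univ :=
    Finset.union_sdiff_of_subset (Finset.subset_univ _)
  have hnew_card : nw.card = m := by
    rw [hnw, Finset.card_sdiff_of_subset (Finset.subset_univ _), hold_card, Finset.card_univ,
      Fintype.card_fin]
    omega
  have hdisj : Disjoint nw (oldSet n m) := Finset.sdiff_disjoint
  set Pf : ℕ → ℝ := fun k => ∏ i ∈ Finset.range k, (θ + (i : ℝ) * σ) with hPf
  -- nonvanishing facts
  have hσ : σ ≠ 0 := ne_of_gt hσ0
  have hRn : risingFac θ n ≠ 0 := by
    intro h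
    simp only [EPV, h, div_zero] at hVnj
    exact lt_irrefl 0 hVnj
  have hPj : Pf (j' + 1) ≠ 0 := by
    intro h
    simp only [EPV, hPf] at hVnj h
    rw [h, zero_div] at hVnj
    exact lt_irrefl 0 hVnj
  have hθn : 0 < θ + (n : ℝ) := by
    have h1 : (1 : ℝ) ≤ (n : ℝ) := by exact_mod_cast hn
    linarith
  have hRm : risingFac (θ + (n : ℝ)) m ≠ 0 := risingFac_ne_zero hθn m
  have hRnm : risingFac θ (n + m) = risingFac θ n * risingFac (θ + (n : ℝ)) m :=
    risingFac_add θ n m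
  have hS : 0 < Ssum σ (oldSet n m) (j' + 1) :=
    Ssum_pos hσ1 hj1 (by rw [hold_card]; exact hjn)
  have hSne : Ssum σ (oldSet n m) (j' + 1) ≠ 0 := ne_of_gt hS
  have hcg : cgfc n (j' + 1) σ = σ ^ (j' + 1) * Ssum σ (oldSet n m) (j' + 1) := by
    have h := Ssum_cgfc σ (oldSet n m) (j' + 1)
    rw [hold_card] at h
    exact h.symm
  have hcgne : cgfc n (j' + 1) σ ≠ 0 := by
    rw [hcg]
    exact mul_ne_zero (pow_ne_zero _ hσ) hSne
  -- Denominator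
  have hDen : (∑ π' ∈ partsJOf (oldSet n m) (j' + 1), gibbsW σ (EPV σ θ n) π')
      = (Pf (j' + 1) / risingFac θ n) * Ssum σ (oldSet n m) (j' + 1) := by
    have hterm : ∀ π' ∈ partsJOf (oldSet n m) (j' + 1),
        gibbsW σ (EPV σ θ n) π'
        = (Pf (j' + 1) / risingFac θ n) * ∏ B ∈ π', risingFac (1 - σ) (B.card - 1) := by
      intro π' hmem
      have hc : π'.card = (j' + 1) := (Finset.mem_filter.1 hmem).2.2
      simp only [gibbsW, EPV, hc, hPf]
    rw [Finset.sum_congr rfl hterm, ← Finset.mul_sum]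
    rfl
  -- Numerator
  have hmaps : ∀ ρ ∈ withJ n m (j' + 1),
      restrictPart ρ (oldSet n m) ∈ partsJOf (oldSet n m) (j' + 1) := by
    intro ρ hρ
    obtain ⟨hP, hc⟩ := (Finset.mem_filter.1 hρ).2
    exact Finset.mem_filter.2 ⟨Finset.mem_univ _,
      restrictPart_isPartOn hP (Finset.subset_univ _), hc⟩
  have hfibset : ∀ π' ∈ partsJOf (oldSet n m) (j' + 1),
      (withJ n m (j' + 1)).filter (fun ρ => restrictPart ρ (oldSet n m) = π')
      = Finset.univ.filter (fun ρ => IsPartOn (oldSet n m ∪ nw) ρ ∧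
          restrictPart ρ (oldSet n m) = π') := by
    intro π' hπ'mem
    have hcard : π'.card = (j' + 1) := (Finset.mem_filter.1 hπ'mem).2.2
    ext ρ
    simp only [withJ, Finset.mem_filter, Finset.mem_univ, true_and, huniv]
    constructor
    · rintro ⟨⟨hP, -⟩, hre⟩
      exact ⟨hP, hre⟩
    · rintro ⟨hP, hre⟩
      exact ⟨⟨hP, by rw [hre, hcard]⟩, hre⟩
  have hNum : (∑ ρ ∈ withJ n m (j' + 1), (Rlcnt n m l ρ : ℝ) * gibbsW σ (EPV σ θ (n+m)) ρ)
      = (1 / risingFac θ (n+m)) * ∑ π' ∈ partsJOf (oldSet n m) (j' + 1), ∑ B ∈ π',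
          wW σ θ π' * (m.choose l : ℝ) * risingFac ((B.card : ℝ) - σ) l *
            risingFac (θ + (n : ℝ) - (B.card : ℝ) + σ) (m - l) := by
    have h1 : ∀ ρ ∈ withJ n m (j' + 1),
        (Rlcnt n m l ρ : ℝ) * gibbsW σ (EPV σ θ (n+m)) ρ
        = (1 / risingFac θ (n+m)) * ((Rlcnt n m l ρ : ℝ) * wW σ θ ρ) := by
      intro ρ _
      simp only [gibbsW, EPV, wW]
      ring
    rw [Finset.sum_congr rfl h1, ← Finset.mul_sum]
    congr 1
    rw [← Finset.sum_fiberwise_of_maps_to hmaps (fun ρ => (Rlcnt n m l ρ : ℝ) * wW σ θ ρ)]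
    refine Finset.sum_congr rfl fun π' hπ'mem => ?_
    rw [hfibset π' hπ'mem]
    have hP : IsPartOn (oldSet n m) π' := (Finset.mem_filter.1 hπ'mem).2.1
    have h2 : ∀ ρ ∈ Finset.univ.filter (fun ρ => IsPartOn (oldSet n m ∪ nw) ρ ∧
          restrictPart ρ (oldSet n m) = π'),
        (Rlcnt n m l ρ : ℝ) * wW σ θ ρ
        = ∑ B ∈ π', (if QL (oldSet n m) B l ρ then wW σ θ ρ else 0) := by
      intro ρ hρ
      have hre : restrictPart ρ (oldSet n m) = π' := (Finset.mem_filter.1 hρ).2.2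
      rw [Rlcnt, hre, Finset.card_filter]
      push_cast
      rw [Finset.sum_mul]
      refine Finset.sum_congr rfl fun B hB => ?_
      unfold QL
      split_ifs with h
      · rw [one_mul]
      · rw [zero_mul]
    rw [Finset.sum_congr rfl h2, Finset.sum_comm]
    refine Finset.sum_congr rfl fun B hB => ?_
    have hkey := keyB σ θ hP hB nw hdisj l
    rw [hnew_card, hold_card] at hkey
    exact hkey
  -- regroup by distinguished block, then by block size
  set Fn : ℕ → ℝ := fun t => Pf (j' + 1) * (m.choose l : ℝ) * risingFac ((t : ℝ) - σ) l *
      risingFac (θ + (n : ℝ) - (t : ℝ) + σ) (m - l) * risingFac (1 - σ) (t - 1) *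
      (cgfc (n - t) j' σ / σ ^ j') with hFn
  have hNum2 : (∑ π' ∈ partsJOf (oldSet n m) (j' + 1), ∑ B ∈ π',
        wW σ θ π' * (m.choose l : ℝ) * risingFac ((B.card : ℝ) - σ) l *
          risingFac (θ + (n : ℝ) - (B.card : ℝ) + σ) (m - l))
      = ∑ t ∈ Finset.Icc 1 (n - j'), (n.choose t : ℝ) * Fn t := by
    have hstep1 : ∀ π' ∈ partsJOf (oldSet n m) (j' + 1), (∑ B ∈ π',
          wW σ θ π' * (m.choose l : ℝ) * risingFac ((B.card : ℝ) - σ) l *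
            risingFac (θ + (n : ℝ) - (B.card : ℝ) + σ) (m - l))
        = ∑ B ∈ π', (Pf (j' + 1) * (m.choose l : ℝ) * risingFac ((B.card : ℝ) - σ) l *
            risingFac (θ + (n : ℝ) - (B.card : ℝ) + σ) (m - l)) *
              ∏ B' ∈ π', risingFac (1 - σ) (B'.card - 1) := by
      intro π' hmem
      have hc : π'.card = j' + 1 := (Finset.mem_filter.1 hmem).2.2
      refine Finset.sum_congr rfl fun B hB => ?_
      rw [wW, hc]
      ring
    rw [Finset.sum_congr rfl hstep1]
    rw [show partsJOf (oldSet n m) (j' + 1) = Finset.univ.filter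
        (fun π' => IsPartOn (oldSet n m) π' ∧ π'.card = j' + 1) from rfl]
    rw [sum_part_block (oldSet n m) j'
      (fun B => Pf (j' + 1) * (m.choose l : ℝ) * risingFac ((B.card : ℝ) - σ) l *
        risingFac (θ + (n : ℝ) - (B.card : ℝ) + σ) (m - l))
      (fun B => risingFac (1 - σ) (B.card - 1))]
    have hstep2 : ∀ B ∈ (oldSet n m).powerset.filter (fun B => B ≠ ∅),
        (Pf (j' + 1) * (m.choose l : ℝ) * risingFac ((B.card : ℝ) - σ) l *
          risingFac (θ + (n : ℝ) - (B.card : ℝ) + σ) (m - l)) *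
            risingFac (1 - σ) (B.card - 1) *
          (∑ π'' ∈ Finset.univ.filter (fun π'' : Finset (Finset (Fin (n+m))) =>
              IsPartOn (oldSet n m \ B) π'' ∧ π''.card = j'),
            ∏ B' ∈ π'', risingFac (1 - σ) (B'.card - 1))
        = Fn B.card := by
      intro B hBmem
      have hBsub : B ⊆ oldSet n m := Finset.mem_powerset.1 (Finset.mem_filter.1 hBmem).1
      have hSsB : Ssum σ (oldSet n m \ B) j' = cgfc (n - B.card) j' σ / σ ^ j' := by
        have h := Ssum_cgfc σ (oldSet n m \ B) j'
        rw [Finset.card_sdiff_of_subset hBsub, hold_card] at h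
        rw [← h]
        field_simp
      rw [show (∑ π'' ∈ Finset.univ.filter (fun π'' : Finset (Finset (Fin (n+m))) =>
              IsPartOn (oldSet n m \ B) π'' ∧ π''.card = j'),
            ∏ B' ∈ π'', risingFac (1 - σ) (B'.card - 1)) = Ssum σ (oldSet n m \ B) j'
          from rfl, hSsB, hFn]
    rw [Finset.sum_congr rfl hstep2, sum_powerset_ne_empty (oldSet n m) Fn, hold_card]
    refine (Finset.sum_subset (Finset.Icc_subset_Icc_right (by omega)) ?_).symm
    intro t htn htno
    have h1t : 1 ≤ t ∧ t ≤ n := Finset.mem_Icc.1 htn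
    have hcg0 : cgfc (n - t) j' σ = 0 := by
      obtain ⟨s', hs'sub, hs'card⟩ := Finset.exists_subset_card_eq (s := oldSet n m) (n := n - t)
        (by rw [hold_card]; omega)
      have h := Ssum_cgfc σ s' j'
      rw [hs'card] at h
      rw [← h, Ssum_card_lt σ (by
        rw [hs'card]
        simp only [Finset.mem_Icc, not_and, not_le] at htno
        omega), mul_zero]
    rw [hFn]
    simp [hcg0]
  -- endgame
  have hterm : ∀ t ∈ Finset.Icc 1 (n - j'), σ ^ (j' + 1) * ((n.choose t : ℝ) * Fn t)
      = Pf (j' + 1) * (m.choose l : ℝ) * (-σ * risingFac (1 - σ) (l - 1)) *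
        ((n.choose t : ℝ) * risingFac (θ + (n : ℝ) - (t : ℝ) + σ) (m - l) *
          cgfc t 1 (σ - (l : ℝ)) * cgfc (n - t) j' σ) := by
    intro t ht
    have h1t : 1 ≤ t := (Finset.mem_Icc.1 ht).1
    have hone : cgfc t 1 (σ - (l : ℝ)) = - risingFac ((l : ℝ) - σ) t := by
      rw [cgfc_one_eq h1t, show -(σ - (l : ℝ)) = (l : ℝ) - σ by ring]
    have hswap := rise_swap σ h1t hl1
    have hpow : σ ^ (j' + 1) = σ * σ ^ j' := by rw [pow_succ]; ring
    rw [hFn, hone, hpow]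
    have hσj : σ ^ j' ≠ 0 := pow_ne_zero _ hσ
    field_simp
    linear_combination ((m.choose l : ℝ) * (n.choose t : ℝ) *
      risingFac (θ + (n : ℝ) - (t : ℝ) + σ) (m - l) * cgfc (n - t) j' σ) * hswap
  have hsum : σ ^ (j' + 1) * (∑ t ∈ Finset.Icc 1 (n - j'), (n.choose t : ℝ) * Fn t)
      = Pf (j' + 1) * (m.choose l : ℝ) * (-σ * risingFac (1 - σ) (l - 1)) *
        (∑ t ∈ Finset.Icc 1 (n - j'), (n.choose t : ℝ) *
          risingFac (θ + (n : ℝ) - (t : ℝ) + σ) (m - l) *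
            cgfc t 1 (σ - (l : ℝ)) * cgfc (n - t) j' σ) := by
    rw [Finset.mul_sum, Finset.mul_sum]
    refine Finset.sum_congr rfl fun t ht => ?_
    rw [hterm t ht]
  have hQuot : condExpK σ (EPV σ θ) n m (j' + 1) (fun ρ => (Rlcnt n m l ρ : ℝ))
      = (∑ ρ ∈ withJ n m (j' + 1), (Rlcnt n m l ρ : ℝ) * gibbsW σ (EPV σ θ (n+m)) ρ) /
        (∑ π' ∈ partsJOf (oldSet n m) (j' + 1), gibbsW σ (EPV σ θ n) π') := rfl
  rw [hQuot, hNum, hNum2, hDen, hRnm, hcg]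
  have hσj1 : σ ^ (j' + 1) ≠ 0 := pow_ne_zero _ hσ
  field_simp
  linear_combination hsum
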